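/- Let g ≥ 0 and let a ∈ ℂ[λ] be a polynomial of degree 2g whose leading coefficient has absolute value 1, which satisfies the reality condition λ^{2g}·conj(a(1/conj(λ))) = a(λ) for all λ ∈ ℂ∖{0}, for which λ^{−g}·a(λ) is a positive real number for every λ with |λ| = 1, and whose 2g roots are pairwise distinct. Then there exist pairwise distinct η_1, …, η_g ∈ ℂ with 0 < |η_j| < 1 such that a(λ) = (−1)^g ∏_{j=1}^g (conj(η_j)/|η_j|)·(λ − η_j)·(λ − 1/conj(η_j)). -/

import Mathlib

open Polynomial Complex

theorem stmt1 (g : ℕ) (a : Polynomial ℂ)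
    (hdeg : a.degree = (2 * g : ℕ))
    (hlead : ‖a.leadingCoeff‖ = 1)
    (hreal : ∀ l : ℂ, l ≠ 0 →
      l ^ (2 * g) * (starRingEnd ℂ) (a.eval (((starRingEnd ℂ) l)⁻¹)) = a.eval l)
    (hpos : ∀ l : ℂ, ‖l‖ = 1 → ∃ r : ℝ, 0 < r ∧ a.eval l / l ^ g = (r : ℂ))
    (hroots : a.roots.Nodup) :
    ∃ η : Fin g → ℂ, Function.Injective η ∧
      (∀ j, 0 < ‖η j‖ ∧ ‖η j‖ < 1) ∧
      a = (-1) ^ g *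
        ∏ j, (C ((starRingEnd ℂ) (η j) / (‖η j‖ : ℂ)) *
          ((X - C (η j)) * (X - C (((starRingEnd ℂ) (η j))⁻¹)))) := by
  classical
  have ha0 : a ≠ 0 := fun h => WithBot.bot_ne_coe (by rw [h, degree_zero] at hdeg; exact hdeg)
  have hnd : a.natDegree = 2 * g := natDegree_eq_of_degree_eq_some hdeg
  have hlne : a.leadingCoeff ≠ 0 := leadingCoeff_ne_zero.mpr ha0
  -- a(0) ≠ 0
  have hev0 : a.eval 0 ≠ 0 := by
    set q : ℂ[X] := a.map (starRingEnd ℂ) with hq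
    have hqdeg : q.natDegree ≤ 2 * g := by
      rw [hq, natDegree_map]; exact hnd.le
    have key : ∀ l : ℂ, l ≠ 0 → (reflect (2 * g) q).eval l = a.eval l := by
      intro l hl
      have : Invertible (l⁻¹ : ℂ) := invertibleOfNonzero (inv_ne_zero hl)
      have h2 := eval₂_reflect_mul_pow (RingHom.id ℂ) (l⁻¹) (2 * g) q hqdeg
      rw [invOf_eq_inv, inv_inv] at h2
      simp only [eval₂_eq_eval_map, Polynomial.map_id] at h2
      have h3 : (reflect (2 * g) q).eval l = l ^ (2 * g) * q.eval l⁻¹ := by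
        rw [← h2, mul_comm (eval l _), ← mul_assoc, ← mul_pow, mul_inv_cancel₀ hl, one_pow, one_mul]
      rw [h3]
      have h4 := hreal l hl
      have h5 : q.eval l⁻¹ = (starRingEnd ℂ) (a.eval (((starRingEnd ℂ) l)⁻¹)) := by
        rw [hq]
        have : (l⁻¹ : ℂ) = (starRingEnd ℂ) (((starRingEnd ℂ) l)⁻¹) := by
          simp [map_inv₀]
        rw [this, eval_map, eval₂_at_apply]
      rw [h5, h4]
    have heq : a = reflect (2 * g) q := by
      have h6 : (a - reflect (2 * g) q) = 0 := by
        apply eq_zero_of_infinite_isRoot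
        apply Set.Infinite.mono (s := {x : ℂ | x ≠ 0})
        · intro x hx
          simp only [Set.mem_setOf_eq, IsRoot, eval_sub, key x hx, sub_self]
        · exact Set.infinite_of_finite_compl (by simp [Set.compl_setOf])
      exact sub_eq_zero.mp h6
    have hc0 : a.coeff 0 = (starRingEnd ℂ) a.leadingCoeff := by
      conv_lhs => rw [heq]
      rw [coeff_reflect, revAt_le (Nat.zero_le _), hq, coeff_map]
      simp [leadingCoeff, hnd]
    rw [← coeff_zero_eq_eval_zero, hc0]
    simp only [ne_eq, _root_.map_eq_zero]
    exact hlne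
  -- roots structure
  have hcard : Multiset.card a.roots = 2 * g := by
    rw [← hnd]
    exact splits_iff_card_roots.mp (IsAlgClosed.splits a)
  set σ : ℂ → ℂ := fun ρ => ((starRingEnd ℂ) ρ)⁻¹ with hσ
  have hσinj : Function.Injective σ := fun x y h =>
    star_injective (inv_injective h)
  set R : Finset ℂ := a.roots.toFinset with hR
  have hRval : R.val = a.roots := Multiset.dedup_eq_self.mpr hroots
  have hmem : ∀ ρ : ℂ, ρ ∈ R ↔ a.eval ρ = 0 := by
    intro ρ; rw [hR, Multiset.mem_toFinset, mem_roots ha0]; exact Iff.rfl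
  have hRne0 : ∀ ρ ∈ R, ρ ≠ 0 := by
    intro ρ hρ h0; exact hev0 (h0 ▸ (hmem ρ).mp hρ)
  have habsne : ∀ ρ ∈ R, ‖ρ‖ ≠ 1 := by
    intro ρ hρ h1
    obtain ⟨r, hr, hre⟩ := hpos ρ h1
    have hρ0 : ρ ≠ 0 := hRne0 ρ hρ
    rw [(hmem ρ).mp hρ, zero_div] at hre
    exact_mod_cast hr.ne (by exact_mod_cast hre)
  have hσmem : ∀ ρ ∈ R, σ ρ ∈ R := by
    intro ρ hρ
    have hρ0 : ρ ≠ 0 := hRne0 ρ hρ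
    have hσ0 : σ ρ ≠ 0 := by simp [hσ, hρ0]
    rw [hmem]
    have h4 := hreal (σ ρ) hσ0
    have : ((starRingEnd ℂ) (σ ρ))⁻¹ = ρ := by simp [hσ, map_inv₀]
    rw [this, (hmem ρ).mp hρ] at h4
    simpa using h4.symm
  have hσabs : ∀ ρ : ℂ, ‖σ ρ‖ = ‖ρ‖⁻¹ := by
    intro ρ; simp [hσ, map_inv₀]
  set S : Finset ℂ := R.filter (fun ρ => ‖ρ‖ < 1) with hS
  set T : Finset ℂ := R.filter (fun ρ => 1 < ‖ρ‖) with hT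
  have hST : Disjoint S T := by
    rw [Finset.disjoint_left]
    intro x hx hx'
    rw [hS, Finset.mem_filter] at hx
    rw [hT, Finset.mem_filter] at hx'
    linarith [hx.2, hx'.2]
  have hSTU : S ∪ T = R := by
    ext ρ
    rw [Finset.mem_union, hS, hT, Finset.mem_filter, Finset.mem_filter]
    constructor
    · rintro (h | h) <;> exact h.1
    · intro h
      rcases lt_or_gt_of_ne (habsne ρ h) with h1 | h1
      · exact Or.inl ⟨h, h1⟩
      · exact Or.inr ⟨h, h1⟩
  have hσσ : ∀ ρ : ℂ, σ (σ ρ) = ρ := by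
    intro ρ; simp [hσ, map_inv₀]
  have hTim : T = S.image σ := by
    ext τ
    rw [Finset.mem_image]
    constructor
    · intro hτ
      rw [hT, Finset.mem_filter] at hτ
      refine ⟨σ τ, ?_, hσσ τ⟩
      rw [hS, Finset.mem_filter]
      refine ⟨hσmem τ hτ.1, ?_⟩
      rw [hσabs]
      exact inv_lt_one_of_one_lt₀ hτ.2
    · rintro ⟨ρ, hρ, rfl⟩
      rw [hS, Finset.mem_filter] at hρ
      rw [hT, Finset.mem_filter]
      refine ⟨hσmem ρ hρ.1, ?_⟩
      rw [hσabs]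
      have : 0 < ‖ρ‖ := norm_pos_iff.mpr (hRne0 ρ hρ.1)
      exact (one_lt_inv₀ this).mpr hρ.2
  have hcardS : S.card = g := by
    have h1 : S.card = T.card := by rw [hTim, Finset.card_image_of_injective _ hσinj]
    have h2 : S.card + T.card = 2 * g := by
      rw [← Finset.card_union_of_disjoint hST, hSTU, Finset.card_def, hRval, hcard]
    omega
  -- enumeration
  have e : S ≃ Fin g := S.equivFinOfCardEq hcardS
  set η : Fin g → ℂ := fun j => ((e.symm j : S) : ℂ) with hη
  have hηmem : ∀ j, η j ∈ S := fun j => (e.symm j).2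
  have hηinj : Function.Injective η :=
    fun i j h => e.symm.injective (Subtype.coe_injective h)
  have hηlt : ∀ j, ‖η j‖ < 1 := by
    intro j
    have := hηmem j
    rw [hS, Finset.mem_filter] at this
    exact this.2
  have hηne0 : ∀ j, η j ≠ 0 := by
    intro j
    have := hηmem j
    rw [hS, Finset.mem_filter] at this
    exact hRne0 _ this.1
  -- factorization
  have hSprod : ∀ f : ℂ → ℂ[X], ∏ ρ ∈ S, f ρ = ∏ j, f (η j) := by
    intro f
    rw [← Finset.prod_coe_sort S f]
    exact (Equiv.prod_comp e.symm (fun x : S => f (x : ℂ))).symm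
  have hfac : a = C a.leadingCoeff *
      ∏ j, ((X - C (η j)) * (X - C (((starRingEnd ℂ) (η j))⁻¹))) := by
    have hfac0 := (C_leadingCoeff_mul_prod_multiset_X_sub_C (p := a) (by rw [hcard, hnd])).symm
    have hTval : T.val = S.val.map σ := by
      rw [hTim, Finset.image_val]
      exact Multiset.dedup_eq_self.mpr (S.nodup.map hσinj)
    have hroots_eq : a.roots = S.val + S.val.map σ := by
      rw [← hTval, ← hRval, ← hSTU, ← Finset.disjUnion_eq_union S T hST]
      rfl
    have hprod : (a.roots.map (fun ρ => X - C ρ)).prod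
        = ∏ ρ ∈ S, ((X - C ρ) * (X - C (σ ρ))) := by
      rw [hroots_eq, Multiset.map_add, Multiset.prod_add, Multiset.map_map]
      rw [Finset.prod_mul_distrib]
      rfl
    calc a = C a.leadingCoeff * (a.roots.map fun ρ => X - C ρ).prod := hfac0
    _ = _ := by rw [hprod, hSprod]
  -- constant identification
  set P : ℂ[X] := ∏ j, ((X - C (η j)) * (X - C (((starRingEnd ℂ) (η j))⁻¹))) with hP
  set u : ℂ := (-1) ^ g * ∏ j, ((starRingEnd ℂ) (η j) / (‖η j‖ : ℂ)) with hu
  have habsC : ∀ j, (‖η j‖ : ℂ) ≠ 0 := by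
    intro j
    simp only [ne_eq, ofReal_eq_zero, norm_eq_zero]
    exact hηne0 j
  have hconjne : ∀ j, (starRingEnd ℂ) (η j) ≠ 0 := by
    intro j
    simp only [ne_eq, _root_.map_eq_zero]
    exact hηne0 j
  have h1ηne : ∀ j, (1 : ℂ) - η j ≠ 0 := by
    intro j h0
    have h1 : η j = 1 := by linear_combination -h0
    have h2 := hηlt j
    rw [h1] at h2
    simp at h2
  set Q : ℝ := ∏ j, (Complex.normSq (1 - η j) / ‖η j‖) with hQ
  have hQpos : 0 < Q := by
    apply Finset.prod_pos
    intro j _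
    exact div_pos (normSq_pos.mpr (h1ηne j)) (norm_pos_iff.mpr (hηne0 j))
  have hPeval : P.eval 1 = ∏ j, ((1 - η j) * (1 - ((starRingEnd ℂ) (η j))⁻¹)) := by
    rw [hP, eval_prod]
    apply Finset.prod_congr rfl
    intro j _
    simp
  have huP : u * P.eval 1 = (Q : ℂ) := by
    rw [hu, hPeval, hQ]
    push_cast
    rw [show ((-1 : ℂ)) ^ g = ∏ _j : Fin g, (-1 : ℂ) by
      rw [Finset.prod_const]; congr 1; simp]
    rw [← Finset.prod_mul_distrib, ← Finset.prod_mul_distrib]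
    apply Finset.prod_congr rfl
    intro j _
    have h4 : ((Complex.normSq (1 - η j)) : ℂ) = (1 - η j) * (1 - (starRingEnd ℂ) (η j)) := by
      rw [← Complex.mul_conj, map_sub, map_one]
    rw [h4]
    have h6 : (starRingEnd ℂ) (η j) * (1 - ((starRingEnd ℂ) (η j))⁻¹)
        = (starRingEnd ℂ) (η j) - 1 := by
      rw [mul_sub, mul_one, mul_inv_cancel₀ (hconjne j)]
    linear_combination (-(1 - η j) * ((‖η j‖ : ℂ))⁻¹) * h6
  have huabs : ‖u‖ = 1 := by
    rw [hu, norm_mul, norm_pow, norm_prod]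
    have h7 : ∀ j ∈ Finset.univ,
        ‖(starRingEnd ℂ) (η j) / (‖η j‖ : ℂ)‖ = 1 := by
      intro j _
      rw [norm_div, Complex.norm_conj, Complex.norm_real, Real.norm_eq_abs,
        _root_.abs_of_nonneg (norm_nonneg _)]
      exact div_self (norm_ne_zero_iff.mpr (hηne0 j))
    rw [Finset.prod_congr rfl h7]
    simp
  have hu0 : u ≠ 0 := by
    intro h0; rw [h0] at huabs; simp at huabs
  obtain ⟨r, hr, hre⟩ := hpos 1 (by rw [norm_one])
  rw [one_pow, div_one] at hre
  have haP : a.eval 1 = a.leadingCoeff * P.eval 1 := by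
    conv_lhs => rw [hfac]
    rw [eval_mul, eval_C, hP]
  have hPe1 : P.eval 1 = (Q : ℂ) / u := by
    field_simp at huP ⊢
    linear_combination huP
  have hlead_eq : a.leadingCoeff = (r / Q : ℝ) * u := by
    have h5 : a.leadingCoeff * ((Q : ℂ) / u) = r := by rw [← hPe1, ← haP, hre]
    have hQ0 : (Q : ℂ) ≠ 0 := by
      simp only [ne_eq, ofReal_eq_zero]; exact hQpos.ne'
    have hiu : u * u⁻¹ = 1 := mul_inv_cancel₀ hu0
    have h5' : a.leadingCoeff * (Q : ℂ) = r * u := by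
      linear_combination u * h5 - a.leadingCoeff * (Q : ℂ) * hiu
    push_cast
    rw [div_mul_eq_mul_div, eq_div_iff hQ0]
    linear_combination h5'
  have hrQ : r / Q = 1 := by
    have := congrArg norm hlead_eq
    rw [hlead, norm_mul, huabs, mul_one, Complex.norm_real, Real.norm_eq_abs,
      abs_of_pos (div_pos hr hQpos)] at this
    exact this.symm
  have hlu : a.leadingCoeff = u := by
    rw [hlead_eq, hrQ]; simp
  refine ⟨η, hηinj, fun j => ⟨norm_pos_iff.mpr (hηne0 j), hηlt j⟩, ?_⟩
  rw [hfac, hlu]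
  rw [Finset.prod_mul_distrib]
  have hCp : (∏ j, C ((starRingEnd ℂ) (η j) / (‖η j‖ : ℂ)))
      = C (∏ j, ((starRingEnd ℂ) (η j) / (‖η j‖ : ℂ))) :=
    (map_prod C (fun j => (starRingEnd ℂ) (η j) / (‖η j‖ : ℂ)) Finset.univ).symm
  rw [hCp, hu, map_mul, map_pow, map_neg, map_one, hP]
  ring
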